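/- Let C ⊆ ℝ^d be a closed strictly convex cone with apex at the origin (a closed convex cone satisfying C ∩ (−C) = {0} and having nonempty interior). Call a closed convex set D ⊆ C C-convex if x + C ⊆ D for every x ∈ D, and cobounded if C \ D is bounded; set covol(D) = vol(C \ D), the Lebesgue measure of C \ D. If D_1 and D_2 are cobounded C-convex regions in C, then covol(D_1)^{1/d} + covol(D_2)^{1/d} ≥ covol(D_1 + D_2)^{1/d}, where D_1 + D_2 = {x + y : x ∈ D_1, y ∈ D_2} is the Minkowski sum. -/

import Mathlib

open MeasureTheory Set
open scoped Pointwise ENNReal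

theorem convex_vol (A : Set ℝ) (hA : Convex ℝ A) (hb : Bornology.IsBounded A) (hne : A.Nonempty) :
    volume A = ENNReal.ofReal (sSup A - sInf A) := by
  have hba : BddAbove A := hb.bddAbove
  have hbb : BddBelow A := hb.bddBelow
  have h1 : A ⊆ Icc (sInf A) (sSup A) := fun x hx => ⟨csInf_le hbb hx, le_csSup hba hx⟩
  have h2 : Ioo (sInf A) (sSup A) ⊆ A := by
    intro x hx
    obtain ⟨a, ha, hax⟩ := exists_lt_of_csInf_lt hne hx.1
    obtain ⟨b, hb', hxb⟩ := exists_lt_of_lt_csSup hne hx.2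
    exact hA.ordConnected.out ha hb' ⟨hax.le, hxb.le⟩
  refine le_antisymm ?_ ?_
  · calc volume A ≤ volume (Icc (sInf A) (sSup A)) := measure_mono h1
      _ = ENNReal.ofReal (sSup A - sInf A) := Real.volume_Icc
  · calc ENNReal.ofReal (sSup A - sInf A) = volume (Ioo (sInf A) (sSup A)) := Real.volume_Ioo.symm
      _ ≤ volume A := measure_mono h2

theorem oneD_sum (A B : Set ℝ) (hA : Convex ℝ A) (hAb : Bornology.IsBounded A) (hAne : A.Nonempty)
    (hB : Convex ℝ B) (hBb : Bornology.IsBounded B) (hBne : B.Nonempty)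
    {l m : ℝ} (hl : 0 < l) (hm : 0 < m) :
    ENNReal.ofReal l * volume A + ENNReal.ofReal m * volume B ≤ volume (l • A + m • B) := by
  set S := l • A + m • B with hS
  have hSc : Convex ℝ S := Convex.add (hA.smul l) (hB.smul m)
  have hSb : Bornology.IsBounded S := (hAb.smul₀ l).add (hBb.smul₀ m)
  have hSne : S.Nonempty := (hAne.smul_set).add (hBne.smul_set)
  have hSba : BddAbove S := hSb.bddAbove
  have hSbb : BddBelow S := hSb.bddBelow
  have memS : ∀ a ∈ A, ∀ b ∈ B, l * a + m * b ∈ S := by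
    intro a ha b hb
    exact Set.add_mem_add (Set.smul_mem_smul_set ha) (Set.smul_mem_smul_set hb)
  have hsup : l * sSup A + m * sSup B ≤ sSup S := by
    have h1 : ∀ b ∈ B, l * sSup A + m * b ≤ sSup S := by
      intro b hb
      have : ∀ a ∈ A, a ≤ (sSup S - m * b) / l := by
        intro a ha
        rw [le_div_iff₀ hl]
        have := le_csSup hSba (memS a ha b hb)
        linarith
      have h2 := csSup_le hAne this
      rw [le_div_iff₀ hl] at h2
      linarith
    have : ∀ b ∈ B, b ≤ (sSup S - l * sSup A) / m := by
      intro b hb; rw [le_div_iff₀ hm]; have := h1 b hb; linarith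
    have := csSup_le hBne this
    rw [le_div_iff₀ hm] at this; linarith
  have hinf : sInf S ≤ l * sInf A + m * sInf B := by
    have h1 : ∀ b ∈ B, sInf S ≤ l * sInf A + m * b := by
      intro b hb
      have : ∀ a ∈ A, (sInf S - m * b) / l ≤ a := by
        intro a ha
        rw [div_le_iff₀ hl]
        have := csInf_le hSbb (memS a ha b hb)
        linarith
      have := le_csInf hAne this
      rw [div_le_iff₀ hl] at this; linarith
    have : ∀ b ∈ B, (sInf S - l * sInf A) / m ≤ b := by
      intro b hb; rw [div_le_iff₀ hm]; have := h1 b hb; linarith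
    have := le_csInf hBne this
    rw [div_le_iff₀ hm] at this; linarith
  have hA' := convex_vol A hA hAb hAne
  have hB' := convex_vol B hB hBb hBne
  have hS' := convex_vol S hSc hSb hSne
  rw [hA', hB', hS']
  rw [← ENNReal.ofReal_mul hl.le, ← ENNReal.ofReal_mul hm.le, ← ENNReal.ofReal_add
    (by nlinarith [Real.sInf_le_sSup A hAb.bddBelow hAb.bddAbove])
    (by nlinarith [Real.sInf_le_sSup B hBb.bddBelow hBb.bddAbove])]
  apply ENNReal.ofReal_le_ofReal
  nlinarith

/-- Multiplicative Brunn–Minkowski in dimension `d`. -/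
def BM (d : ℕ) : Prop := ∀ K L : Set (Fin d → ℝ), IsCompact K → Convex ℝ K → K.Nonempty →
  IsCompact L → Convex ℝ L → L.Nonempty → ∀ l m : ℝ, 0 < l → 0 < m → l + m = 1 →
  volume K ^ l * volume L ^ m ≤ volume (l • K + m • L)

set_option maxHeartbeats 2000000 in
theorem bm_prod {d : ℕ} (ih : BM d) (K L : Set (ℝ × (Fin d → ℝ)))
    (hKc : IsCompact K) (hKx : Convex ℝ K) (hKn : K.Nonempty)
    (hLc : IsCompact L) (hLx : Convex ℝ L) (hLn : L.Nonempty)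
    (l m : ℝ) (hl : 0 < l) (hm : 0 < m) (hlm : l + m = 1) :
    volume K ^ l * volume L ^ m ≤ volume (l • K + m • L) := by
  classical
  -- trivial cases
  rcases eq_or_ne (volume K) 0 with hK0 | hK0
  · rw [hK0, ENNReal.zero_rpow_of_pos hl, zero_mul]; exact zero_le
  rcases eq_or_ne (volume L) 0 with hL0 | hL0
  · rw [hL0, ENNReal.zero_rpow_of_pos hm, mul_zero]; exact zero_le
  set M : Set (ℝ × (Fin d → ℝ)) := l • K + m • L with hM
  have hMc : IsCompact M := ((hKc.image (continuous_const_smul l)).add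
      (hLc.image (continuous_const_smul m)))
  have hMx : Convex ℝ M := Convex.add (hKx.smul l) (hLx.smul m)
  -- sections helper
  have sect_compact : ∀ (S : Set (ℝ × (Fin d → ℝ))), IsCompact S → ∀ t : ℝ,
      IsCompact (Prod.mk t ⁻¹' S) := by
    intro S hS t
    have hcl : IsClosed (Prod.mk t ⁻¹' S) := hS.isClosed.preimage (Continuous.prodMk_right t)
    obtain ⟨R, hR⟩ := hS.isBounded.subset_closedBall 0
    have hbd : Bornology.IsBounded (Prod.mk t ⁻¹' S) := by
      refine (Metric.isBounded_closedBall (x := (0 : Fin d → ℝ)) (r := R)).subset ?_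
      intro y hy
      have h1 := hR hy
      simp only [Metric.mem_closedBall, dist_zero_right] at h1 ⊢
      exact le_trans (norm_snd_le (t, y)) h1
    exact Metric.isCompact_of_isClosed_isBounded hcl hbd
  have sect_fin : ∀ (S : Set (ℝ × (Fin d → ℝ))), IsCompact S → ∀ t : ℝ,
      volume (Prod.mk t ⁻¹' S) ≠ ∞ := fun S hS t => (sect_compact S hS t).measure_lt_top.ne
  have sect_conv : ∀ (S : Set (ℝ × (Fin d → ℝ))), Convex ℝ S → ∀ t : ℝ,
      Convex ℝ (Prod.mk t ⁻¹' S) := by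
    intro S hS t x hx y hy a b ha hb hab
    have h2 := hS hx hy ha hb hab
    have ht : a * t + b * t = t := by rw [← add_mul, hab, one_mul]
    have : a • (t, x) + b • (t, y) = (t, a • x + b • y) := by
      rw [Prod.smul_mk, Prod.smul_mk, Prod.mk_add_mk, smul_eq_mul, smul_eq_mul, ht]
    rwa [this] at h2
  set kk : ℝ → ℝ≥0∞ := fun t => volume (Prod.mk t ⁻¹' K) with hkk
  set ll : ℝ → ℝ≥0∞ := fun t => volume (Prod.mk t ⁻¹' L) with hll
  set mm : ℝ → ℝ≥0∞ := fun t => volume (Prod.mk t ⁻¹' M) with hmm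
  set k' : ℝ → ℝ := fun t => (kk t).toReal with hk'
  set l' : ℝ → ℝ := fun t => (ll t).toReal with hl'
  set m' : ℝ → ℝ := fun t => (mm t).toReal with hm'
  have hkkm : Measurable kk := measurable_measure_prodMk_left hKc.measurableSet
  have hllm : Measurable ll := measurable_measure_prodMk_left hLc.measurableSet
  have volsec : ∀ (S : Set (ℝ × (Fin d → ℝ))), MeasurableSet S →
      volume S = ∫⁻ t : ℝ, volume (Prod.mk t ⁻¹' S) := by
    intro S hS
    rw [MeasureTheory.Measure.volume_eq_prod, MeasureTheory.Measure.prod_apply hS]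
  -- F and G
  set F : ℝ≥0∞ := ⨆ t, kk t with hF
  set G : ℝ≥0∞ := ⨆ t, ll t with hG
  have hFtop : F ≠ ∞ := by
    obtain ⟨R, hR⟩ := hKc.isBounded.subset_closedBall 0
    refine ne_top_of_le_ne_top
      (measure_closedBall_lt_top : volume (Metric.closedBall (0 : Fin d → ℝ) R) < ∞).ne ?_
    refine iSup_le fun t => measure_mono fun y hy => ?_
    have h1 := hR hy
    simp only [Metric.mem_closedBall, dist_zero_right] at h1 ⊢
    exact le_trans (norm_snd_le (t, y)) h1
  have hGtop : G ≠ ∞ := by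
    obtain ⟨R, hR⟩ := hLc.isBounded.subset_closedBall 0
    refine ne_top_of_le_ne_top
      (measure_closedBall_lt_top : volume (Metric.closedBall (0 : Fin d → ℝ) R) < ∞).ne ?_
    refine iSup_le fun t => measure_mono fun y hy => ?_
    have h1 := hR hy
    simp only [Metric.mem_closedBall, dist_zero_right] at h1 ⊢
    exact le_trans (norm_snd_le (t, y)) h1
  have hF0 : F ≠ 0 := by
    intro h
    apply hK0
    have hz : ∀ t, kk t = 0 := fun t => le_antisymm (h ▸ le_iSup kk t) zero_le
    calc volume K = ∫⁻ t, kk t := volsec K hKc.measurableSet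
      _ = 0 := by simp [hz]
  have hG0 : G ≠ 0 := by
    intro h
    apply hL0
    have hz : ∀ t, ll t = 0 := fun t => le_antisymm (h ▸ le_iSup ll t) zero_le
    calc volume L = ∫⁻ t, ll t := volsec L hLc.measurableSet
      _ = 0 := by simp [hz]
  set Fr : ℝ := F.toReal with hFr
  set Gr : ℝ := G.toReal with hGr
  have hFrpos : 0 < Fr := ENNReal.toReal_pos hF0 hFtop
  have hGrpos : 0 < Gr := ENNReal.toReal_pos hG0 hGtop
  set N : ℝ := Fr ^ l * Gr ^ m with hN
  have hNpos : 0 < N := mul_pos (Real.rpow_pos_of_pos hFrpos l) (Real.rpow_pos_of_pos hGrpos m)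
  set θf : ℝ := Fr / N with hθf
  set θg : ℝ := Gr / N with hθg
  have hθfpos : 0 < θf := div_pos hFrpos hNpos
  have hθgpos : 0 < θg := div_pos hGrpos hNpos
  have hθ1 : θf ^ l * θg ^ m = 1 := by
    rw [hθf, hθg, Real.div_rpow hFrpos.le hNpos.le, Real.div_rpow hGrpos.le hNpos.le]
    rw [div_mul_div_comm, ← Real.rpow_add hNpos, hlm, Real.rpow_one, hN, div_self hNpos.ne']
  -- bounds on k'
  have hk'le : ∀ t, k' t ≤ Fr := fun t =>
    ENNReal.toReal_mono hFtop (le_iSup kk t)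
  have hl'le : ∀ t, l' t ≤ Gr := fun t =>
    ENNReal.toReal_mono hGtop (le_iSup ll t)
  have hk'lt : ∀ u : ℝ, 0 ≤ u → u < Fr → ∃ t, u < k' t := by
    intro u hu hult
    have h1 : ENNReal.ofReal u < F := by
      rw [← ENNReal.ofReal_toReal hFtop]
      exact (ENNReal.ofReal_lt_ofReal_iff_of_nonneg hu).2 hult
    obtain ⟨t, ht⟩ := lt_iSup_iff.mp h1
    refine ⟨t, ?_⟩
    have h2 := ENNReal.toReal_strict_mono (sect_fin K hKc t) ht
    rwa [ENNReal.toReal_ofReal hu] at h2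
  have hl'lt : ∀ u : ℝ, 0 ≤ u → u < Gr → ∃ t, u < l' t := by
    intro u hu hult
    have h1 : ENNReal.ofReal u < G := by
      rw [← ENNReal.ofReal_toReal hGtop]
      exact (ENNReal.ofReal_lt_ofReal_iff_of_nonneg hu).2 hult
    obtain ⟨t, ht⟩ := lt_iSup_iff.mp h1
    refine ⟨t, ?_⟩
    have h2 := ENNReal.toReal_strict_mono (sect_fin L hLc t) ht
    rwa [ENNReal.toReal_ofReal hu] at h2
  -- membership in sums of scalings
  have memsum : ∀ (P Q : Set (ℝ × (Fin d → ℝ))) (a b r w : ℝ) (p q : Fin d → ℝ),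
      (r, p) ∈ P → (w, q) ∈ Q → (a * r + b * w, a • p + b • q) ∈ a • P + b • Q := by
    intro P Q a b r w p q hp hq
    exact Set.add_mem_add (Set.smul_mem_smul_set hp) (Set.smul_mem_smul_set hq)
  -- nonempty sections from positive measure
  have nonempty_sect : ∀ (S : Set (ℝ × (Fin d → ℝ))) (c t : ℝ), IsCompact S → 0 < c →
      c ≤ (volume (Prod.mk t ⁻¹' S)).toReal → (Prod.mk t ⁻¹' S).Nonempty := by
    intro S c t hS hc hle
    apply nonempty_of_measure_ne_zero (μ := volume)
    intro h0
    rw [h0] at hle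
    simp at hle
    linarith
  -- the sum bound for sections, for arbitrary compact convex P Q and weights
  have sect_bound : ∀ (cp cq r w : ℝ), 0 < cp → 0 < cq →
      cp ≤ k' r → cq ≤ l' w → ENNReal.ofReal (cp ^ l * cq ^ m) ≤ mm (l * r + m * w) := by
    intro cp cq r w hcp hcq hpr hqw
    have ha := hl; have hb := hm; have hab := hlm
    set a := l with hadef; set b := m with hbdef
    have hrne : (Prod.mk r ⁻¹' K).Nonempty := nonempty_sect K cp r hKc hcp hpr
    have hwne : (Prod.mk w ⁻¹' L).Nonempty := nonempty_sect L cq w hLc hcq hqw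
    have hsum := ih (Prod.mk r ⁻¹' K) (Prod.mk w ⁻¹' L) (sect_compact K hKc r)
      (sect_conv K hKx r) hrne (sect_compact L hLc w) (sect_conv L hLx w) hwne a b ha hb hab
    have hsub : a • (Prod.mk r ⁻¹' K) + b • (Prod.mk w ⁻¹' L) ⊆ Prod.mk (a * r + b * w) ⁻¹' M := by
      rintro z ⟨u, hu, v, hv, rfl⟩
      obtain ⟨p, hp, rfl⟩ := hu
      obtain ⟨q, hq, rfl⟩ := hv
      simp only [mem_preimage]
      exact memsum K L a b r w p q hp hq
    have h1 : ENNReal.ofReal cp ≤ kk r := ENNReal.ofReal_le_of_le_toReal hpr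
    have h2 : ENNReal.ofReal cq ≤ ll w := ENNReal.ofReal_le_of_le_toReal hqw
    calc ENNReal.ofReal (cp ^ a * cq ^ b)
        = ENNReal.ofReal (cp ^ a) * ENNReal.ofReal (cq ^ b) :=
          ENNReal.ofReal_mul (Real.rpow_nonneg hcp.le a)
      _ = ENNReal.ofReal cp ^ a * ENNReal.ofReal cq ^ b := by
          rw [← ENNReal.ofReal_rpow_of_nonneg hcp.le ha.le,
            ← ENNReal.ofReal_rpow_of_nonneg hcq.le hb.le]
      _ ≤ kk r ^ a * ll w ^ b :=
          mul_le_mul' (ENNReal.rpow_le_rpow h1 ha.le) (ENNReal.rpow_le_rpow h2 hb.le)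
      _ ≤ volume (a • (Prod.mk r ⁻¹' K) + b • (Prod.mk w ⁻¹' L)) := hsum
      _ ≤ mm (a * r + b * w) := measure_mono hsub
  -- same for K alone (used for convexity of level sets)
  have sect_boundK : ∀ (a b : ℝ), 0 < a → 0 < b → a + b = 1 → ∀ (c r w : ℝ), 0 < c →
      c ≤ k' r → c ≤ k' w → c ≤ k' (a * r + b * w) := by
    intro a b ha hb hab c r w hc hpr hqw
    have hrne : (Prod.mk r ⁻¹' K).Nonempty := nonempty_sect K c r hKc hc hpr
    have hwne : (Prod.mk w ⁻¹' K).Nonempty := nonempty_sect K c w hKc hc hqw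
    have hsum := ih (Prod.mk r ⁻¹' K) (Prod.mk w ⁻¹' K) (sect_compact K hKc r)
      (sect_conv K hKx r) hrne (sect_compact K hKc w) (sect_conv K hKx w) hwne a b ha hb hab
    have hsub : a • (Prod.mk r ⁻¹' K) + b • (Prod.mk w ⁻¹' K) ⊆ Prod.mk (a * r + b * w) ⁻¹' K := by
      rintro z ⟨u, hu, v, hv, rfl⟩
      obtain ⟨p, hp, rfl⟩ := hu
      obtain ⟨q, hq, rfl⟩ := hv
      simp only [mem_preimage]
      have h5 := hKx hp hq ha.le hb.le hab
      have heq : a • (r, p) + b • (w, q) = (a * r + b * w, a • p + b • q) := by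
        rw [Prod.smul_mk, Prod.smul_mk, Prod.mk_add_mk, smul_eq_mul, smul_eq_mul]
      rwa [heq] at h5
    have h1 : ENNReal.ofReal c ≤ kk r := ENNReal.ofReal_le_of_le_toReal hpr
    have h2 : ENNReal.ofReal c ≤ kk w := ENNReal.ofReal_le_of_le_toReal hqw
    have h3 : ENNReal.ofReal c ≤ kk (a * r + b * w) := by
      calc ENNReal.ofReal c = ENNReal.ofReal c ^ a * ENNReal.ofReal c ^ b := by
            rw [← ENNReal.rpow_add _ _ (by simpa using hc) ENNReal.ofReal_ne_top, hab,
              ENNReal.rpow_one]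
        _ ≤ kk r ^ a * kk w ^ b :=
            mul_le_mul' (ENNReal.rpow_le_rpow h1 ha.le) (ENNReal.rpow_le_rpow h2 hb.le)
        _ ≤ volume (a • (Prod.mk r ⁻¹' K) + b • (Prod.mk w ⁻¹' K)) := hsum
        _ ≤ kk (a * r + b * w) := measure_mono hsub
    have h4 := ENNReal.toReal_mono (sect_fin K hKc _) h3
    rwa [ENNReal.toReal_ofReal hc.le] at h4
  have sect_boundL : ∀ (a b : ℝ), 0 < a → 0 < b → a + b = 1 → ∀ (c r w : ℝ), 0 < c →
      c ≤ l' r → c ≤ l' w → c ≤ l' (a * r + b * w) := by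
    intro a b ha hb hab c r w hc hpr hqw
    have hrne : (Prod.mk r ⁻¹' L).Nonempty := nonempty_sect L c r hLc hc hpr
    have hwne : (Prod.mk w ⁻¹' L).Nonempty := nonempty_sect L c w hLc hc hqw
    have hsum := ih (Prod.mk r ⁻¹' L) (Prod.mk w ⁻¹' L) (sect_compact L hLc r)
      (sect_conv L hLx r) hrne (sect_compact L hLc w) (sect_conv L hLx w) hwne a b ha hb hab
    have hsub : a • (Prod.mk r ⁻¹' L) + b • (Prod.mk w ⁻¹' L) ⊆ Prod.mk (a * r + b * w) ⁻¹' L := by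
      rintro z ⟨u, hu, v, hv, rfl⟩
      obtain ⟨p, hp, rfl⟩ := hu
      obtain ⟨q, hq, rfl⟩ := hv
      simp only [mem_preimage]
      have h5 := hLx hp hq ha.le hb.le hab
      have heq : a • (r, p) + b • (w, q) = (a * r + b * w, a • p + b • q) := by
        rw [Prod.smul_mk, Prod.smul_mk, Prod.mk_add_mk, smul_eq_mul, smul_eq_mul]
      rwa [heq] at h5
    have h1 : ENNReal.ofReal c ≤ ll r := ENNReal.ofReal_le_of_le_toReal hpr
    have h2 : ENNReal.ofReal c ≤ ll w := ENNReal.ofReal_le_of_le_toReal hqw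
    have h3 : ENNReal.ofReal c ≤ ll (a * r + b * w) := by
      calc ENNReal.ofReal c = ENNReal.ofReal c ^ a * ENNReal.ofReal c ^ b := by
            rw [← ENNReal.rpow_add _ _ (by simpa using hc) ENNReal.ofReal_ne_top, hab,
              ENNReal.rpow_one]
        _ ≤ ll r ^ a * ll w ^ b :=
            mul_le_mul' (ENNReal.rpow_le_rpow h1 ha.le) (ENNReal.rpow_le_rpow h2 hb.le)
        _ ≤ volume (a • (Prod.mk r ⁻¹' L) + b • (Prod.mk w ⁻¹' L)) := hsum
        _ ≤ ll (a * r + b * w) := measure_mono hsub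
    have h4 := ENNReal.toReal_mono (sect_fin L hLc _) h3
    rwa [ENNReal.toReal_ofReal hc.le] at h4
  -- convexity-boundedness-nonemptiness of level sets
  have levelK : ∀ c : ℝ, 0 < c → Convex ℝ {t | c ≤ k' t} ∧
      Bornology.IsBounded {t | c ≤ k' t} := by
    intro c hc
    constructor
    · intro r hr w hw a b ha hb hab
      simp only [mem_setOf_eq] at hr hw ⊢
      rcases eq_or_lt_of_le ha with h0 | ha'
      · have hb1 : b = 1 := by linarith
        simpa [← h0, hb1] using hw
      rcases eq_or_lt_of_le hb with h0 | hb'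
      · have ha1 : a = 1 := by linarith
        simpa [← h0, ha1] using hr
      exact sect_boundK a b ha' hb' hab c r w hc hr hw
    · refine ((hKc.image continuous_fst).isBounded).subset ?_
      intro t ht
      simp only [mem_setOf_eq] at ht
      have h0 : kk t ≠ 0 := by
        intro h0
        rw [hk'] at ht
        simp only [h0, ENNReal.toReal_zero] at ht
        linarith
      obtain ⟨y, hy⟩ := nonempty_of_measure_ne_zero h0
      exact ⟨(t, y), hy, rfl⟩
  have levelL : ∀ c : ℝ, 0 < c → Convex ℝ {t | c ≤ l' t} ∧
      Bornology.IsBounded {t | c ≤ l' t} := by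
    intro c hc
    constructor
    · intro r hr w hw a b ha hb hab
      simp only [mem_setOf_eq] at hr hw ⊢
      rcases eq_or_lt_of_le ha with h0 | ha'
      · have hb1 : b = 1 := by linarith
        simpa [← h0, hb1] using hw
      rcases eq_or_lt_of_le hb with h0 | hb'
      · have ha1 : a = 1 := by linarith
        simpa [← h0, ha1] using hr
      exact sect_boundL a b ha' hb' hab c r w hc hr hw
    · refine ((hLc.image continuous_fst).isBounded).subset ?_
      intro t ht
      simp only [mem_setOf_eq] at ht
      have h0 : ll t ≠ 0 := by
        intro h0
        rw [hl'] at ht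
        simp only [h0, ENNReal.toReal_zero] at ht
        linarith
      obtain ⟨y, hy⟩ := nonempty_of_measure_ne_zero h0
      exact ⟨(t, y), hy, rfl⟩
  -- Claim 1
  have claim1 : ∀ s : ℝ, 0 < s → s ≠ N →
      ENNReal.ofReal l * volume {t | s * θf ≤ k' t} +
        ENNReal.ofReal m * volume {t | s * θg ≤ l' t} ≤ volume {t | s ≤ m' t} := by
    intro s hs hsN
    rcases lt_or_gt_of_ne hsN with hlt | hgt
    · -- s < N
      have hθfc : 0 < s * θf := mul_pos hs hθfpos
      have hθgc : 0 < s * θg := mul_pos hs hθgpos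
      have hAne : {t | s * θf ≤ k' t}.Nonempty := by
        have h1 : s * θf < Fr := by
          have h2 : s * θf < N * θf := by nlinarith
          rwa [hθf, mul_div_cancel₀ Fr hNpos.ne'] at h2
        obtain ⟨t, ht⟩ := hk'lt (s * θf) hθfc.le h1
        exact ⟨t, ht.le⟩
      have hBne : {t | s * θg ≤ l' t}.Nonempty := by
        have h1 : s * θg < Gr := by
          have h2 : s * θg < N * θg := by nlinarith
          rwa [hθg, mul_div_cancel₀ Gr hNpos.ne'] at h2
        obtain ⟨t, ht⟩ := hl'lt (s * θg) hθgc.le h1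
        exact ⟨t, ht.le⟩
      have hsub2 : l • {t | s * θf ≤ k' t} + m • {t | s * θg ≤ l' t} ⊆ {t | s ≤ m' t} := by
        rintro z ⟨u, hu, v, hv, rfl⟩
        obtain ⟨r, hr, rfl⟩ := hu
        obtain ⟨w, hw, rfl⟩ := hv
        simp only [mem_setOf_eq] at hr hw ⊢
        have h3 := sect_bound (s * θf) (s * θg) r w hθfc hθgc hr hw
        have halg : (s * θf) ^ l * (s * θg) ^ m = s := by
          rw [Real.mul_rpow hs.le hθfpos.le, Real.mul_rpow hs.le hθgpos.le]
          calc s ^ l * θf ^ l * (s ^ m * θg ^ m) = (s ^ l * s ^ m) * (θf ^ l * θg ^ m) := by ring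
            _ = s := by rw [hθ1, ← Real.rpow_add hs, hlm, Real.rpow_one, mul_one]
        rw [halg] at h3
        have h4 := ENNReal.toReal_mono (sect_fin M hMc _) h3
        rw [ENNReal.toReal_ofReal hs.le] at h4
        simpa [smul_eq_mul] using h4
      calc ENNReal.ofReal l * volume {t | s * θf ≤ k' t} +
            ENNReal.ofReal m * volume {t | s * θg ≤ l' t}
          ≤ volume (l • {t | s * θf ≤ k' t} + m • {t | s * θg ≤ l' t}) :=
            oneD_sum _ _ (levelK _ hθfc).1 (levelK _ hθfc).2 hAne
              (levelL _ hθgc).1 (levelL _ hθgc).2 hBne hl hm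
        _ ≤ volume {t | s ≤ m' t} := measure_mono hsub2
    · -- s > N : both sets empty
      have hA : {t | s * θf ≤ k' t} = ∅ := by
        ext t
        simp only [mem_setOf_eq, mem_empty_iff_false, iff_false, not_le]
        calc k' t ≤ Fr := hk'le t
          _ = N * θf := by rw [hθf, mul_div_cancel₀ Fr hNpos.ne']
          _ < s * θf := by nlinarith
      have hB : {t | s * θg ≤ l' t} = ∅ := by
        ext t
        simp only [mem_setOf_eq, mem_empty_iff_false, iff_false, not_le]
        calc l' t ≤ Gr := hl'le t
          _ = N * θg := by rw [hθg, mul_div_cancel₀ Gr hNpos.ne']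
          _ < s * θg := by nlinarith
      rw [hA, hB]
      simp
  -- integrate
  have hmmm : Measurable mm := measurable_measure_prodMk_left hMc.measurableSet
  have hMvol : volume M = ∫⁻ s in Ioi (0 : ℝ), volume {t | s ≤ m' t} := by
    calc volume M = ∫⁻ t, mm t := volsec M hMc.measurableSet
      _ = ∫⁻ t, ENNReal.ofReal (m' t) := lintegral_congr fun t =>
          (ENNReal.ofReal_toReal (sect_fin M hMc t)).symm
      _ = ∫⁻ s in Ioi 0, volume {t | s ≤ m' t} :=
          lintegral_eq_lintegral_meas_le volume (ae_of_all _ fun t => ENNReal.toReal_nonneg)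
            hmmm.ennreal_toReal.aemeasurable
  have hKint : ∫⁻ s in Ioi (0 : ℝ), volume {t | s * θf ≤ k' t}
      = ENNReal.ofReal θf⁻¹ * volume K := by
    have e1 : ∀ s : ℝ, {t | s ≤ k' t / θf} = {t | s * θf ≤ k' t} := by
      intro s; ext t; simp only [mem_setOf_eq, le_div_iff₀ hθfpos]
    have e2 : ∫⁻ s in Ioi (0 : ℝ), volume {t | s ≤ k' t / θf}
        = ∫⁻ t, ENNReal.ofReal (k' t / θf) :=
      (lintegral_eq_lintegral_meas_le volume
        (ae_of_all _ fun t => by positivity)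
        ((hkkm.ennreal_toReal.div_const θf).aemeasurable)).symm
    calc ∫⁻ s in Ioi (0 : ℝ), volume {t | s * θf ≤ k' t}
        = ∫⁻ s in Ioi (0 : ℝ), volume {t | s ≤ k' t / θf} := by simp_rw [e1]
      _ = ∫⁻ t, ENNReal.ofReal (k' t / θf) := e2
      _ = ∫⁻ t, ENNReal.ofReal θf⁻¹ * ENNReal.ofReal (k' t) := by
          refine lintegral_congr fun t => ?_
          rw [div_eq_inv_mul, ENNReal.ofReal_mul (by positivity)]
      _ = ENNReal.ofReal θf⁻¹ * ∫⁻ t, ENNReal.ofReal (k' t) :=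
          lintegral_const_mul _ hkkm.ennreal_toReal.ennreal_ofReal
      _ = ENNReal.ofReal θf⁻¹ * volume K := by
          congr 1
          rw [volsec K hKc.measurableSet]
          exact lintegral_congr fun t => ENNReal.ofReal_toReal (sect_fin K hKc t)
  have hLint : ∫⁻ s in Ioi (0 : ℝ), volume {t | s * θg ≤ l' t}
      = ENNReal.ofReal θg⁻¹ * volume L := by
    have e1 : ∀ s : ℝ, {t | s ≤ l' t / θg} = {t | s * θg ≤ l' t} := by
      intro s; ext t; simp only [mem_setOf_eq, le_div_iff₀ hθgpos]
    have e2 : ∫⁻ s in Ioi (0 : ℝ), volume {t | s ≤ l' t / θg}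
        = ∫⁻ t, ENNReal.ofReal (l' t / θg) :=
      (lintegral_eq_lintegral_meas_le volume
        (ae_of_all _ fun t => by positivity)
        ((hllm.ennreal_toReal.div_const θg).aemeasurable)).symm
    calc ∫⁻ s in Ioi (0 : ℝ), volume {t | s * θg ≤ l' t}
        = ∫⁻ s in Ioi (0 : ℝ), volume {t | s ≤ l' t / θg} := by simp_rw [e1]
      _ = ∫⁻ t, ENNReal.ofReal (l' t / θg) := e2
      _ = ∫⁻ t, ENNReal.ofReal θg⁻¹ * ENNReal.ofReal (l' t) := by
          refine lintegral_congr fun t => ?_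
          rw [div_eq_inv_mul, ENNReal.ofReal_mul (by positivity)]
      _ = ENNReal.ofReal θg⁻¹ * ∫⁻ t, ENNReal.ofReal (l' t) :=
          lintegral_const_mul _ hllm.ennreal_toReal.ennreal_ofReal
      _ = ENNReal.ofReal θg⁻¹ * volume L := by
          congr 1
          rw [volsec L hLc.measurableSet]
          exact lintegral_congr fun t => ENNReal.ofReal_toReal (sect_fin L hLc t)
  -- measurability of the level-volume functions
  have hmeasA : Measurable fun s : ℝ => volume {t | s * θf ≤ k' t} := by
    have : Antitone fun s : ℝ => volume {t | s * θf ≤ k' t} := by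
      intro s1 s2 h12
      refine measure_mono fun t ht => ?_
      simp only [mem_setOf_eq] at ht ⊢
      nlinarith
    exact this.measurable
  have hmeasB : Measurable fun s : ℝ => volume {t | s * θg ≤ l' t} := by
    have : Antitone fun s : ℝ => volume {t | s * θg ≤ l' t} := by
      intro s1 s2 h12
      refine measure_mono fun t ht => ?_
      simp only [mem_setOf_eq] at ht ⊢
      nlinarith
    exact this.measurable
  have hae : ∀ᵐ s : ℝ ∂volume, s ≠ N := by
    rw [ae_iff]
    have : {a : ℝ | ¬a ≠ N} = {N} := by ext x; simp
    rw [this]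
    exact measure_singleton N
  have main : ENNReal.ofReal l * (ENNReal.ofReal θf⁻¹ * volume K) +
      ENNReal.ofReal m * (ENNReal.ofReal θg⁻¹ * volume L) ≤ volume M := by
    rw [hMvol, ← hKint, ← hLint, ← lintegral_const_mul _ hmeasA, ← lintegral_const_mul _ hmeasB,
      ← lintegral_add_left (hmeasA.const_mul _)]
    apply lintegral_mono_ae
    filter_upwards [ae_restrict_mem measurableSet_Ioi, ae_restrict_of_ae hae] with s hs hsN
    exact claim1 s hs hsN
  -- final: AM-GM
  have hKtop : volume K ≠ ∞ := hKc.measure_lt_top.ne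
  have hLtop : volume L ≠ ∞ := hLc.measure_lt_top.ne
  set xr : ℝ := (volume K).toReal with hxr
  set yr : ℝ := (volume L).toReal with hyr
  have hxrpos : 0 < xr := ENNReal.toReal_pos hK0 hKtop
  have hyrpos : 0 < yr := ENNReal.toReal_pos hL0 hLtop
  have hreal : xr ^ l * yr ^ m ≤ l * (θf⁻¹ * xr) + m * (θg⁻¹ * yr) := by
    have am := Real.geom_mean_le_arith_mean2_weighted hl.le hm.le
      (by positivity : (0:ℝ) ≤ θf⁻¹ * xr) (by positivity : (0:ℝ) ≤ θg⁻¹ * yr) hlm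
    have heq : (θf⁻¹ * xr) ^ l * ((θg⁻¹ * yr) ^ m) = xr ^ l * yr ^ m := by
      rw [Real.mul_rpow (by positivity) hxrpos.le, Real.mul_rpow (by positivity) hyrpos.le,
        Real.inv_rpow hθfpos.le, Real.inv_rpow hθgpos.le]
      have h9 : (θf ^ l)⁻¹ * (θg ^ m)⁻¹ = 1 := by rw [← mul_inv, hθ1, inv_one]
      calc (θf ^ l)⁻¹ * xr ^ l * ((θg ^ m)⁻¹ * yr ^ m)
          = (θf ^ l)⁻¹ * (θg ^ m)⁻¹ * (xr ^ l * yr ^ m) := by ring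
        _ = xr ^ l * yr ^ m := by rw [h9, one_mul]
    linarith [am, heq.ge, heq.le]
  calc volume K ^ l * volume L ^ m
      = ENNReal.ofReal xr ^ l * ENNReal.ofReal yr ^ m := by
        rw [hxr, hyr, ENNReal.ofReal_toReal hKtop, ENNReal.ofReal_toReal hLtop]
    _ = ENNReal.ofReal (xr ^ l * yr ^ m) := by
        rw [ENNReal.ofReal_rpow_of_nonneg hxrpos.le hl.le,
          ENNReal.ofReal_rpow_of_nonneg hyrpos.le hm.le,
          ENNReal.ofReal_mul (Real.rpow_nonneg hxrpos.le l)]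
    _ ≤ ENNReal.ofReal (l * (θf⁻¹ * xr) + m * (θg⁻¹ * yr)) := ENNReal.ofReal_le_ofReal hreal
    _ = ENNReal.ofReal l * (ENNReal.ofReal θf⁻¹ * ENNReal.ofReal xr) +
        ENNReal.ofReal m * (ENNReal.ofReal θg⁻¹ * ENNReal.ofReal yr) := by
        rw [ENNReal.ofReal_add (by positivity) (by positivity),
          ENNReal.ofReal_mul hl.le, ENNReal.ofReal_mul hm.le,
          ENNReal.ofReal_mul (by positivity), ENNReal.ofReal_mul (by positivity)]
    _ = ENNReal.ofReal l * (ENNReal.ofReal θf⁻¹ * volume K) +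
        ENNReal.ofReal m * (ENNReal.ofReal θg⁻¹ * volume L) := by
        rw [hxr, hyr, ENNReal.ofReal_toReal hKtop, ENNReal.ofReal_toReal hLtop]
    _ ≤ volume M := main

theorem bm_zero : BM 0 := by
  intro K L hKc hKx hKn hLc hLx hLn l m hl hm hlm
  have huniv : ∀ S : Set (Fin 0 → ℝ), S.Nonempty → S = Set.univ := by
    intro S hS
    obtain ⟨z, hz⟩ := hS
    refine Set.eq_univ_of_forall fun x => ?_
    rwa [Subsingleton.elim x z]
  have hvol : volume (Set.univ : Set (Fin 0 → ℝ)) = 1 := by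
    rw [MeasureTheory.volume_pi, Measure.pi_univ]
    simp
  rw [huniv _ ((hKn.smul_set).add (hLn.smul_set)), huniv K hKn, huniv L hLn, hvol,
    ENNReal.one_rpow, ENNReal.one_rpow, one_mul]

theorem bm_succ (d : ℕ) (ih : BM d) : BM (d + 1) := by
  intro K L hKc hKx hKn hLc hLx hLn l m hl hm hlm
  set e := MeasurableEquiv.piFinSuccAbove (fun _ : Fin (d + 1) => ℝ) 0 with he
  have hmp : MeasurePreserving e := volume_preserving_piFinSuccAbove (fun _ => ℝ) 0
  set φ : (Fin (d + 1) → ℝ) →ₗ[ℝ] ℝ × (Fin d → ℝ) :=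
    LinearMap.prod (LinearMap.proj 0) (LinearMap.funLeft ℝ ℝ Fin.succ) with hφdef
  have hφ : ⇑e = ⇑φ := by
    funext x
    show ((Fin.insertNthEquiv (fun _ => ℝ) 0).symm) x = _
    simp [Fin.insertNthEquiv, hφdef, LinearMap.funLeft]
    rfl
  have hcont : Continuous ⇑e := by rw [hφ]; exact φ.continuous_of_finiteDimensional
  have hvolpre : ∀ S : Set (Fin (d + 1) → ℝ), NullMeasurableSet S volume →
      volume (⇑e '' S) = volume S := by
    intro S hS
    rw [show ⇑e '' S = ⇑e.symm ⁻¹' S from Equiv.image_eq_preimage_symm _ _]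
    exact (MeasurePreserving.symm e hmp).measure_preimage hS
  have himg : ∀ (c : ℝ) (A : Set (Fin (d + 1) → ℝ)), ⇑e '' (c • A) = c • (⇑e '' A) := by
    intro c A
    rw [hφ]
    ext z
    constructor
    · rintro ⟨x, ⟨p, hp, rfl⟩, rfl⟩
      exact ⟨φ p, mem_image_of_mem _ hp, by simp [φ.map_smul]⟩
    · rintro ⟨u, ⟨p, hp, rfl⟩, rfl⟩
      exact ⟨c • p, smul_mem_smul_set hp, by simp [φ.map_smul]⟩
  have himg2 : ∀ A B : Set (Fin (d + 1) → ℝ), ⇑e '' (A + B) = ⇑e '' A + ⇑e '' B := by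
    intro A B
    rw [hφ]
    ext z
    constructor
    · rintro ⟨x, ⟨u, hu, v, hv, rfl⟩, rfl⟩
      exact ⟨φ u, mem_image_of_mem _ hu, φ v, mem_image_of_mem _ hv, by simp [φ.map_add]⟩
    · rintro ⟨u, ⟨p, hp, rfl⟩, v, ⟨q, hq, rfl⟩, rfl⟩
      exact ⟨p + q, Set.add_mem_add hp hq, by simp [φ.map_add]⟩
  have hMc : IsCompact (l • K + m • L) :=
    (hKc.image (continuous_const_smul l)).add (hLc.image (continuous_const_smul m))
  have h1 : volume K = volume (⇑e '' K) := (hvolpre K hKc.measurableSet.nullMeasurableSet).symm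
  have h2 : volume L = volume (⇑e '' L) := (hvolpre L hLc.measurableSet.nullMeasurableSet).symm
  have h3 : volume (l • K + m • L) = volume (l • (⇑e '' K) + m • (⇑e '' L)) := by
    rw [← himg, ← himg, ← himg2]
    exact (hvolpre _ hMc.measurableSet.nullMeasurableSet).symm
  rw [h1, h2, h3]
  refine bm_prod ih (⇑e '' K) (⇑e '' L) (hKc.image hcont) ?_ (hKn.image _)
    (hLc.image hcont) ?_ (hLn.image _) l m hl hm hlm
  · rw [hφ]; exact hKx.linear_image φ
  · rw [hφ]; exact hLx.linear_image φ

theorem bm_all (d : ℕ) : BM d := by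
  induction d with
  | zero => exact bm_zero
  | succ n ih => exact bm_succ n ih

set_option maxHeartbeats 1600000 in
/-- **Theorem (Khovanskii–Timorin, reversed Brunn–Minkowski inequality).**
Let `C ⊆ ℝ^d` be a closed strictly convex cone with apex at the origin (a closed convex
cone with `C ∩ (−C) = {0}` and nonempty interior).  If `D₁` and `D₂` are cobounded
`C`-convex regions in `C`, then
`covol(D₁)^{1/d} + covol(D₂)^{1/d} ≥ covol(D₁ + D₂)^{1/d}`, where
`covol(D) = vol(C \ D)` and `D₁ + D₂` is the Minkowski sum. -/
theorem stmt18 (d : ℕ)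
    (C : Set (Fin d → ℝ))
    (hCclosed : IsClosed C) (hCconvex : Convex ℝ C)
    (hCcone : ∀ x ∈ C, ∀ t : ℝ, 0 ≤ t → t • x ∈ C)
    (hC0 : (0 : Fin d → ℝ) ∈ C)
    (hCstrict : C ∩ (-C) = {0})
    (hCint : (interior C).Nonempty)
    (D₁ D₂ : Set (Fin d → ℝ))
    (hD₁closed : IsClosed D₁) (hD₂closed : IsClosed D₂)
    (hD₁convex : Convex ℝ D₁) (hD₂convex : Convex ℝ D₂)
    (hD₁sub : D₁ ⊆ C) (hD₂sub : D₂ ⊆ C)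
    (hD₁C : ∀ x ∈ D₁, ∀ y ∈ C, x + y ∈ D₁)
    (hD₂C : ∀ x ∈ D₂, ∀ y ∈ C, x + y ∈ D₂)
    (hD₁cob : Bornology.IsBounded (C \ D₁))
    (hD₂cob : Bornology.IsBounded (C \ D₂)) :
    (volume (C \ (D₁ + D₂))).toReal ^ ((1 : ℝ) / d) ≤
      (volume (C \ D₁)).toReal ^ ((1 : ℝ) / d) +
        (volume (C \ D₂)).toReal ^ ((1 : ℝ) / d) := by
  classical
  -- d = 0
  rcases Nat.eq_zero_or_pos d with hd0 | hdpos
  · subst hd0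
    norm_num [Real.rpow_zero]
  have hdR : (0 : ℝ) < d := by exact_mod_cast hdpos
  have hdne : (d : ℝ) ≠ 0 := hdR.ne'
  -- finiteness of covolumes
  have hfin : ∀ S : Set (Fin d → ℝ), Bornology.IsBounded S → volume S ≠ ∞ := by
    intro S hS
    obtain ⟨R, hR⟩ := hS.subset_closedBall 0
    exact ne_top_of_le_ne_top
      (measure_closedBall_lt_top : volume (Metric.closedBall (0 : Fin d → ℝ) R) < ∞).ne
      (measure_mono hR)
  have hfin₁ := hfin _ hD₁cob
  have hfin₂ := hfin _ hD₂cob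
  set V₁ : ℝ := (volume (C \ D₁)).toReal with hV₁def
  set V₂ : ℝ := (volume (C \ D₂)).toReal with hV₂def
  -- if covolume vanishes, D = C
  have hDfull : ∀ D : Set (Fin d → ℝ), IsClosed D → volume (C \ D) = 0 → C ⊆ D := by
    intro D hDc h0
    have hUnull : volume (interior C \ D) = 0 :=
      measure_mono_null (diff_subset_diff_left interior_subset) h0
    have hUempty : interior C \ D = ∅ :=
      (isOpen_interior.sdiff hDc).eq_empty_of_measure_zero hUnull
    have hintsub : interior C ⊆ D := by
      intro x hx
      by_contra hxD
      exact absurd (mem_diff_of_mem hx hxD) (by rw [hUempty]; exact notMem_empty x)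
    -- every point of C is a limit of interior points
    intro x hx
    obtain ⟨y₀, hy₀⟩ := hCint
    have hmem : ∀ n : ℕ, (1 / ((n : ℝ) + 1)) • y₀ + ((1 : ℝ) - 1 / ((n : ℝ) + 1)) • x ∈ D := by
      intro n
      have hn : (0 : ℝ) < 1 / (n + 1) := by positivity
      have hn2 : (0 : ℝ) ≤ 1 - 1 / (n + 1) := by
        have : (1 : ℝ) ≤ (n : ℝ) + 1 := by exact_mod_cast Nat.one_le_iff_ne_zero.2 (Nat.succ_ne_zero n)
        have h3 : (1 : ℝ) / (n + 1) ≤ 1 := by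
          rw [div_le_one (by positivity)]; linarith
        linarith
      exact hintsub (hCconvex.combo_interior_closure_mem_interior hy₀ (subset_closure hx)
        hn hn2 (by ring))
    have hlim : Filter.Tendsto (fun n : ℕ => (1 / ((n : ℝ) + 1)) • y₀ + ((1 : ℝ) - 1 / ((n : ℝ) + 1)) • x)
        Filter.atTop (nhds x) := by
      have h1 : Filter.Tendsto (fun n : ℕ => (1 / (n + 1) : ℝ)) Filter.atTop (nhds 0) :=
        tendsto_one_div_add_atTop_nhds_zero_nat
      have h2 : Filter.Tendsto (fun n : ℕ => ((1 : ℝ) - 1 / ((n : ℝ) + 1))) Filter.atTop (nhds 1) := by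
        simpa using tendsto_const_nhds.sub h1
      have h3 : Filter.Tendsto (fun n : ℕ => (1 / ((n : ℝ) + 1)) • y₀) Filter.atTop
          (nhds ((0 : ℝ) • y₀)) := h1.smul (tendsto_const_nhds (x := y₀))
      have h4 : Filter.Tendsto (fun n : ℕ => ((1 : ℝ) - 1 / ((n : ℝ) + 1)) • x) Filter.atTop
          (nhds ((1 : ℝ) • x)) := h2.smul (tendsto_const_nhds (x := x))
      have h5 := h3.add h4
      simpa using h5
    exact hDc.mem_of_tendsto hlim (Filter.Eventually.of_forall hmem)
  -- C is closed under addition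
  have hCadd : ∀ x ∈ C, ∀ y ∈ C, x + y ∈ C := by
    intro x hx y hy
    have h1 : (1 / 2 : ℝ) • x + (1 / 2 : ℝ) • y ∈ C :=
      hCconvex hx hy (by norm_num) (by norm_num) (by norm_num)
    have h2 := hCcone _ h1 2 (by norm_num)
    have : (2 : ℝ) • ((1 / 2 : ℝ) • x + (1 / 2 : ℝ) • y) = x + y := by
      rw [smul_add, smul_smul, smul_smul]; norm_num
    rwa [this] at h2
  have hD12C : D₁ + D₂ ⊆ C := by
    rintro z ⟨u, hu, v, hv, rfl⟩
    exact hCadd u (hD₁sub hu) v (hD₂sub hv)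
  -- degenerate cases
  by_cases hV₁0 : volume (C \ D₁) = 0
  · have hC1 : C ⊆ D₁ := hDfull D₁ hD₁closed hV₁0
    have hsub : C \ (D₁ + D₂) ⊆ C \ D₂ := by
      intro x hx
      refine ⟨hx.1, fun hxD₂ => hx.2 ?_⟩
      exact ⟨0, hC1 hC0, x, hxD₂, zero_add x⟩
    have h1 : (volume (C \ (D₁ + D₂))).toReal ≤ V₂ :=
      ENNReal.toReal_mono hfin₂ (measure_mono hsub)
    have h2 : V₁ = 0 := by rw [hV₁def, hV₁0, ENNReal.toReal_zero]
    rw [h2, Real.zero_rpow (by positivity : (1:ℝ)/d ≠ 0), zero_add]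
    exact Real.rpow_le_rpow ENNReal.toReal_nonneg h1 (by positivity)
  by_cases hV₂0 : volume (C \ D₂) = 0
  · have hC2 : C ⊆ D₂ := hDfull D₂ hD₂closed hV₂0
    have hsub : C \ (D₁ + D₂) ⊆ C \ D₁ := by
      intro x hx
      refine ⟨hx.1, fun hxD₁ => hx.2 ?_⟩
      exact ⟨x, hxD₁, 0, hC2 hC0, add_zero x⟩
    have h1 : (volume (C \ (D₁ + D₂))).toReal ≤ V₁ :=
      ENNReal.toReal_mono hfin₁ (measure_mono hsub)
    have h2 : V₂ = 0 := by rw [hV₂def, hV₂0, ENNReal.toReal_zero]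
    rw [h2, Real.zero_rpow (by positivity : (1:ℝ)/d ≠ 0), add_zero]
    exact Real.rpow_le_rpow ENNReal.toReal_nonneg h1 (by positivity)
  -- main case
  have hV₁pos : 0 < V₁ := ENNReal.toReal_pos hV₁0 hfin₁
  have hV₂pos : 0 < V₂ := ENNReal.toReal_pos hV₂0 hfin₂
  set a : ℝ := V₁ ^ ((1 : ℝ) / d) with hadef
  set b : ℝ := V₂ ^ ((1 : ℝ) / d) with hbdef
  have hapos : 0 < a := Real.rpow_pos_of_pos hV₁pos _
  have hbpos : 0 < b := Real.rpow_pos_of_pos hV₂pos _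
  have habpos : 0 < a + b := by linarith
  have haV : a ^ d = V₁ := by
    rw [hadef, ← Real.rpow_natCast (V₁ ^ ((1:ℝ)/d)) d, ← Real.rpow_mul hV₁pos.le]
    rw [one_div_mul_cancel hdne, Real.rpow_one]
  have hbV : b ^ d = V₂ := by
    rw [hbdef, ← Real.rpow_natCast (V₂ ^ ((1:ℝ)/d)) d, ← Real.rpow_mul hV₂pos.le]
    rw [one_div_mul_cancel hdne, Real.rpow_one]
  -- unit truncation volume
  have hvpos : 0 < volume (C ∩ Metric.closedBall 0 1) := by
    obtain ⟨x₀, hx₀⟩ := hCint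
    have hx0C : x₀ ∈ C := interior_subset hx₀
    set t : ℝ := min 1 (1 / (2 * (‖x₀‖ + 1))) with htdef
    have htpos : 0 < t := by
      apply lt_min one_pos
      positivity
    have htle : t * ‖x₀‖ < 1 := by
      have h1 : t ≤ 1 / (2 * (‖x₀‖ + 1)) := min_le_right _ _
      have h2 : 0 ≤ ‖x₀‖ := norm_nonneg _
      have h3 : t * ‖x₀‖ ≤ (1 / (2 * (‖x₀‖ + 1))) * ‖x₀‖ := by
        apply mul_le_mul_of_nonneg_right h1 h2
      have h4 : (1 / (2 * (‖x₀‖ + 1))) * ‖x₀‖ < 1 := by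
        rw [div_mul_eq_mul_div, div_lt_one (by positivity)]
        nlinarith
      linarith
    have hto : t • x₀ ∈ interior C := by
      have hopen : IsOpen (t • interior C) := isOpen_interior.smul₀ htpos.ne'
      have hsub : t • interior C ⊆ C := by
        rintro z ⟨y, hy, rfl⟩
        exact hCcone y (interior_subset hy) t htpos.le
      have := interior_maximal hsub hopen
      exact this ⟨x₀, hx₀, rfl⟩
    have hball : t • x₀ ∈ Metric.ball (0 : Fin d → ℝ) 1 := by
      simp only [Metric.mem_ball, dist_zero_right, norm_smul, Real.norm_eq_abs,
        abs_of_pos htpos]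
      exact htle
    have hopen2 : IsOpen (interior C ∩ Metric.ball 0 1) :=
      isOpen_interior.inter Metric.isOpen_ball
    have hpos := hopen2.measure_pos volume ⟨t • x₀, hto, hball⟩
    refine lt_of_lt_of_le hpos (measure_mono ?_)
    exact inter_subset_inter interior_subset Metric.ball_subset_closedBall
  set vr : ℝ := (volume (C ∩ Metric.closedBall 0 1)).toReal with hvrdef
  have hvtop : volume (C ∩ Metric.closedBall 0 1) ≠ ∞ :=
    hfin _ (Metric.isBounded_closedBall.subset inter_subset_right)
  have hvrpos : 0 < vr := ENNReal.toReal_pos hvpos.ne' hvtop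
  -- scaling of truncations
  have hscale : ∀ r : ℝ, 0 < r →
      volume (C ∩ Metric.closedBall 0 r) = ENNReal.ofReal (r ^ d * vr) := by
    intro r hr
    have hset : C ∩ Metric.closedBall 0 r = r • (C ∩ Metric.closedBall 0 1) := by
      ext x
      constructor
      · rintro ⟨hxC, hxball⟩
        refine ⟨r⁻¹ • x, ⟨hCcone x hxC r⁻¹ (by positivity), ?_⟩, smul_inv_smul₀ hr.ne' x⟩
        simp only [Metric.mem_closedBall, dist_zero_right] at hxball ⊢
        rw [norm_smul, Real.norm_eq_abs, abs_of_pos (by positivity)]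
        rw [inv_mul_le_iff₀ hr, mul_one]
        exact hxball
      · rintro ⟨y, ⟨hyC, hyball⟩, rfl⟩
        refine ⟨hCcone y hyC r hr.le, ?_⟩
        simp only [Metric.mem_closedBall, dist_zero_right] at hyball ⊢
        rw [norm_smul, Real.norm_eq_abs, abs_of_pos hr]
        calc r * ‖y‖ ≤ r * 1 := by nlinarith
          _ = r := mul_one r
    rw [hset, Measure.addHaar_smul_of_nonneg volume hr.le, Module.finrank_fin_fun,
      ← ENNReal.ofReal_toReal hvtop, ← hvrdef, ← ENNReal.ofReal_mul (by positivity)]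
  -- truncation decomposition
  have htrunc : ∀ (D : Set (Fin d → ℝ)), IsClosed D → D ⊆ C → (∀ R : ℝ, C \ D ⊆
      Metric.closedBall 0 R → ∀ r : ℝ, R ≤ r → 0 < r →
      ENNReal.ofReal (r ^ d * vr) = volume (D ∩ Metric.closedBall 0 r) + volume (C \ D)) := by
    intro D hDc hDsub R hR r hRr hr
    have hunion : C ∩ Metric.closedBall 0 r =
        (D ∩ Metric.closedBall 0 r) ∪ (C \ D) := by
      ext x
      constructor
      · rintro ⟨hxC, hxb⟩
        by_cases hxD : x ∈ D
        · exact Or.inl ⟨hxD, hxb⟩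
        · exact Or.inr ⟨hxC, hxD⟩
      · rintro (⟨hxD, hxb⟩ | hxCD)
        · exact ⟨hDsub hxD, hxb⟩
        · exact ⟨hxCD.1, Metric.closedBall_subset_closedBall hRr (hR hxCD)⟩
    have hdisj : Disjoint (D ∩ Metric.closedBall 0 r) (C \ D) := by
      rw [Set.disjoint_left]
      rintro x ⟨hxD, _⟩ hxCD
      exact hxCD.2 hxD
    rw [← hscale r hr, hunion,
      measure_union hdisj (hCclosed.measurableSet.diff hDc.measurableSet)]
  obtain ⟨R₁, hR₁⟩ := hD₁cob.subset_closedBall 0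
  obtain ⟨R₂, hR₂⟩ := hD₂cob.subset_closedBall 0
  -- good measurable core of the complement
  have hEnm : NullMeasurableSet (C \ (D₁ + D₂)) volume :=
    (hCclosed.measurableSet.nullMeasurableSet).diff ((hD₁convex.add hD₂convex).nullMeasurableSet volume)
  obtain ⟨E', hE'sub, hE'meas, hE'ae⟩ := hEnm.exists_measurable_subset_ae_eq
  have hE'vol : volume E' = volume (C \ (D₁ + D₂)) := measure_congr hE'ae
  -- the key bound
  have bound : ∀ s : ℝ, R₁ / a ≤ s → R₂ / b ≤ s → 1 < s ^ d * vr → 0 < s →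
      volume (E' ∩ Metric.closedBall 0 ((a + b) * s)) ≤ ENNReal.ofReal ((a + b) ^ d) := by
    intro s hs₁ hs₂ hsv hspos
    set c : ℝ := s ^ d * vr - 1 with hcdef
    have hcpos : 0 < c := by simp only [hcdef]; linarith
    set K₁ : Set (Fin d → ℝ) := D₁ ∩ Metric.closedBall 0 (a * s) with hK₁def
    set K₂ : Set (Fin d → ℝ) := D₂ ∩ Metric.closedBall 0 (b * s) with hK₂def
    have haspos : 0 < a * s := by positivity
    have hbspos : 0 < b * s := by positivity
    -- volumes of truncations
    have hvolK₁ : volume K₁ = ENNReal.ofReal (a ^ d * c) := by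
      have h1 := htrunc D₁ hD₁closed hD₁sub R₁ hR₁ (a * s)
        (by rw [div_le_iff₀ hapos] at hs₁; linarith) haspos
      have h2 : volume (C \ D₁) = ENNReal.ofReal V₁ := (ENNReal.ofReal_toReal hfin₁).symm
      rw [h2] at h1
      have h3 : volume K₁ = ENNReal.ofReal ((a * s) ^ d * vr) - ENNReal.ofReal V₁ :=
        ENNReal.eq_sub_of_add_eq ENNReal.ofReal_ne_top h1.symm
      rw [h3, ← ENNReal.ofReal_sub _ hV₁pos.le]
      congr 1
      rw [← haV, hcdef]
      rw [mul_pow]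
      ring
    have hvolK₂ : volume K₂ = ENNReal.ofReal (b ^ d * c) := by
      have h1 := htrunc D₂ hD₂closed hD₂sub R₂ hR₂ (b * s)
        (by rw [div_le_iff₀ hbpos] at hs₂; linarith) hbspos
      have h2 : volume (C \ D₂) = ENNReal.ofReal V₂ := (ENNReal.ofReal_toReal hfin₂).symm
      rw [h2] at h1
      have h3 : volume K₂ = ENNReal.ofReal ((b * s) ^ d * vr) - ENNReal.ofReal V₂ :=
        ENNReal.eq_sub_of_add_eq ENNReal.ofReal_ne_top h1.symm
      rw [h3, ← ENNReal.ofReal_sub _ hV₂pos.le]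
      congr 1
      rw [← hbV, hcdef]
      rw [mul_pow]
      ring
    -- properties
    have hK₁c : IsCompact K₁ := Metric.isCompact_of_isClosed_isBounded
      (hD₁closed.inter Metric.isClosed_closedBall)
      (Metric.isBounded_closedBall.subset inter_subset_right)
    have hK₂c : IsCompact K₂ := Metric.isCompact_of_isClosed_isBounded
      (hD₂closed.inter Metric.isClosed_closedBall)
      (Metric.isBounded_closedBall.subset inter_subset_right)
    have hK₁x : Convex ℝ K₁ := hD₁convex.inter (convex_closedBall 0 (a * s))
    have hK₂x : Convex ℝ K₂ := hD₂convex.inter (convex_closedBall 0 (b * s))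
    have hK₁ne : K₁.Nonempty := by
      apply nonempty_of_measure_ne_zero (μ := volume)
      rw [hvolK₁]
      simp only [ne_eq, ENNReal.ofReal_eq_zero, not_le]
      positivity
    have hK₂ne : K₂.Nonempty := by
      apply nonempty_of_measure_ne_zero (μ := volume)
      rw [hvolK₂]
      simp only [ne_eq, ENNReal.ofReal_eq_zero, not_le]
      positivity
    set lam : ℝ := a / (a + b) with hlamdef
    set mu : ℝ := b / (a + b) with hmudef
    have hlam : 0 < lam := by positivity
    have hmu : 0 < mu := by positivity
    have hlammu : lam + mu = 1 := by
      rw [hlamdef, hmudef, ← add_div, div_self habpos.ne']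
    set P : Set (Fin d → ℝ) := lam⁻¹ • K₁ with hPdef
    set Q : Set (Fin d → ℝ) := mu⁻¹ • K₂ with hQdef
    have hPQ : lam • P + mu • Q = K₁ + K₂ := by
      rw [hPdef, hQdef, smul_smul, smul_smul, mul_inv_cancel₀ hlam.ne',
        mul_inv_cancel₀ hmu.ne', one_smul, one_smul]
    have hvolP : volume P = ENNReal.ofReal ((a + b) ^ d * c) := by
      rw [hPdef, Measure.addHaar_smul_of_nonneg volume (by positivity) K₁,
        Module.finrank_fin_fun, hvolK₁, ← ENNReal.ofReal_mul (by positivity)]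
      congr 1
      rw [hlamdef, inv_div, div_pow]
      field_simp
    have hvolQ : volume Q = ENNReal.ofReal ((a + b) ^ d * c) := by
      rw [hQdef, Measure.addHaar_smul_of_nonneg volume (by positivity) K₂,
        Module.finrank_fin_fun, hvolK₂, ← ENNReal.ofReal_mul (by positivity)]
      congr 1
      rw [hmudef, inv_div, div_pow]
      field_simp
    have hPc : IsCompact P := hK₁c.image (continuous_const_smul _)
    have hQc : IsCompact Q := hK₂c.image (continuous_const_smul _)
    have hPx : Convex ℝ P := hK₁x.smul _
    have hQx : Convex ℝ Q := hK₂x.smul _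
    have hPn : P.Nonempty := hK₁ne.smul_set
    have hQn : Q.Nonempty := hK₂ne.smul_set
    have hbm := bm_all d P Q hPc hPx hPn hQc hQx hQn lam mu hlam hmu hlammu
    rw [hPQ, hvolP, hvolQ] at hbm
    have hXne : ENNReal.ofReal ((a + b) ^ d * c) ≠ 0 := by
      simp only [ne_eq, ENNReal.ofReal_eq_zero, not_le]
      positivity
    have hsum : ENNReal.ofReal ((a + b) ^ d * c) ≤ volume (K₁ + K₂) := by
      calc ENNReal.ofReal ((a + b) ^ d * c)
          = ENNReal.ofReal ((a + b) ^ d * c) ^ lam * ENNReal.ofReal ((a + b) ^ d * c) ^ mu := by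
            rw [← ENNReal.rpow_add _ _ hXne ENNReal.ofReal_ne_top, hlammu, ENNReal.rpow_one]
        _ ≤ volume (K₁ + K₂) := hbm
    -- disjoint union bound
    have hsub1 : K₁ + K₂ ⊆ D₁ + D₂ := Set.add_subset_add inter_subset_left inter_subset_left
    have hsub2 : K₁ + K₂ ⊆ Metric.closedBall 0 ((a + b) * s) := by
      rintro z ⟨u, hu, v, hv, rfl⟩
      have h1 : ‖u‖ ≤ a * s := by
        have := hu.2; simpa [Metric.mem_closedBall, dist_zero_right] using this
      have h2 : ‖v‖ ≤ b * s := by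
        have := hv.2; simpa [Metric.mem_closedBall, dist_zero_right] using this
      simp only [Metric.mem_closedBall, dist_zero_right]
      calc ‖u + v‖ ≤ ‖u‖ + ‖v‖ := norm_add_le u v
        _ ≤ a * s + b * s := by linarith
        _ = (a + b) * s := by ring
    have hdisj : Disjoint (K₁ + K₂) (E' ∩ Metric.closedBall 0 ((a + b) * s)) := by
      rw [Set.disjoint_left]
      intro z hz1 hz2
      exact (hE'sub hz2.1).2 (hsub1 hz1)
    have hcup : (K₁ + K₂) ∪ (E' ∩ Metric.closedBall 0 ((a + b) * s)) ⊆
        C ∩ Metric.closedBall 0 ((a + b) * s) := by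
      rintro z (hz | hz)
      · exact ⟨hD12C (hsub1 hz), hsub2 hz⟩
      · exact ⟨(hE'sub hz.1).1, hz.2⟩
    have hun : volume (K₁ + K₂) + volume (E' ∩ Metric.closedBall 0 ((a + b) * s)) ≤
        ENNReal.ofReal (((a + b) * s) ^ d * vr) := by
      rw [← measure_union hdisj (hE'meas.inter measurableSet_closedBall),
        ← hscale _ (by positivity)]
      exact measure_mono hcup
    have h6 : ENNReal.ofReal ((a + b) ^ d * c) +
        volume (E' ∩ Metric.closedBall 0 ((a + b) * s)) ≤
        ENNReal.ofReal (((a + b) * s) ^ d * vr) :=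
      le_trans (add_le_add hsum le_rfl) hun
    have h7 := ENNReal.le_sub_of_add_le_left ENNReal.ofReal_ne_top h6
    calc volume (E' ∩ Metric.closedBall 0 ((a + b) * s))
        ≤ ENNReal.ofReal (((a + b) * s) ^ d * vr) - ENNReal.ofReal ((a + b) ^ d * c) := h7
      _ = ENNReal.ofReal (((a + b) * s) ^ d * vr - (a + b) ^ d * c) :=
          (ENNReal.ofReal_sub _ (by positivity)).symm
      _ = ENNReal.ofReal ((a + b) ^ d) := by
          congr 1
          rw [hcdef, mul_pow]
          ring
  -- take the union over balls
  have hW : volume (C \ (D₁ + D₂)) ≤ ENNReal.ofReal ((a + b) ^ d) := by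
    rw [← hE'vol]
    set base : ℝ := max (max (R₁ / a) (R₂ / b)) (max 1 ((2 / vr) ^ ((1:ℝ) / d))) with hbase
    set sfun : ℕ → ℝ := fun n => max base n with hsfun
    have hsprop : ∀ n : ℕ, R₁ / a ≤ sfun n ∧ R₂ / b ≤ sfun n ∧ 1 < (sfun n) ^ d * vr ∧
        0 < sfun n := by
      intro n
      have h1 : base ≤ sfun n := le_max_left _ _
      have hb1 : (1 : ℝ) ≤ base := le_trans (le_max_left 1 _) (le_max_right _ _)
      refine ⟨le_trans (le_trans (le_max_left _ _) (le_max_left _ _)) h1,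
        le_trans (le_trans (le_max_right _ _) (le_max_left _ _)) h1, ?_, by linarith⟩
      have h2 : ((2 / vr) ^ ((1:ℝ) / d)) ≤ sfun n :=
        le_trans (le_trans (le_max_right 1 _) (le_max_right _ _)) h1
      have h3 : (0:ℝ) ≤ (2 / vr) ^ ((1:ℝ) / d) := Real.rpow_nonneg (by positivity) _
      have h4 : ((2 / vr) ^ ((1:ℝ) / d)) ^ d ≤ (sfun n) ^ d :=
        pow_le_pow_left₀ h3 h2 d
      have h5 : ((2 / vr) ^ ((1:ℝ) / d)) ^ d = 2 / vr := by
        rw [← Real.rpow_natCast ((2/vr) ^ ((1:ℝ)/d)) d, ← Real.rpow_mul (by positivity)]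
        rw [one_div_mul_cancel hdne, Real.rpow_one]
      rw [h5] at h4
      have : (2 / vr) * vr ≤ (sfun n) ^ d * vr := by nlinarith
      rw [div_mul_cancel₀ 2 hvrpos.ne'] at this
      linarith
    have hcover : E' = ⋃ n : ℕ, E' ∩ Metric.closedBall 0 ((a + b) * sfun n) := by
      ext x
      simp only [mem_iUnion, mem_inter_iff]
      constructor
      · intro hx
        obtain ⟨n, hn⟩ := exists_nat_ge (‖x‖ / (a + b))
        refine ⟨n, hx, ?_⟩
        simp only [Metric.mem_closedBall, dist_zero_right]
        have h1 : ‖x‖ / (a + b) ≤ sfun n := le_trans hn (le_max_right _ _)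
        rw [div_le_iff₀ habpos] at h1
        linarith [h1]
      · rintro ⟨n, hn, _⟩
        exact hn
    have hmono : Directed (· ⊆ ·) (fun n : ℕ => E' ∩ Metric.closedBall 0 ((a + b) * sfun n)) := by
      apply Monotone.directed_le
      intro n1 n2 h12
      apply inter_subset_inter_right
      apply Metric.closedBall_subset_closedBall
      have : sfun n1 ≤ sfun n2 := by
        apply max_le_max le_rfl
        exact_mod_cast h12
      nlinarith [this, habpos]
    rw [hcover, hmono.measure_iUnion]
    refine iSup_le fun n => ?_
    obtain ⟨hp1, hp2, hp3, hp4⟩ := hsprop n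
    exact bound (sfun n) hp1 hp2 hp3 hp4
  -- finish
  have hWr : (volume (C \ (D₁ + D₂))).toReal ≤ (a + b) ^ d :=
    ENNReal.toReal_le_of_le_ofReal (by positivity) hW
  calc (volume (C \ (D₁ + D₂))).toReal ^ ((1:ℝ)/d)
      ≤ ((a + b) ^ d) ^ ((1:ℝ)/d) :=
        Real.rpow_le_rpow ENNReal.toReal_nonneg hWr (by positivity)
    _ = a + b := by
        rw [← Real.rpow_natCast (a + b) d, ← Real.rpow_mul habpos.le]
        rw [mul_one_div, div_self hdne, Real.rpow_one]
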